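/- Let A be a contract automaton with most permissive controller KS_A, and let s₁ and s₂ be the initial configurations of KS_A and of the communicating system S(KS_A), respectively. If s₁ can perform the sequence of actions φ in KS_A, then s₂ can perform ⟦φ⟧ under the 1-buffer semantics of S(KS_A). -/
import Mathlib


namespace CAut

/-- A context of labels: requests, offers, a distinguished idle label, and an
involution swapping requests and offers and fixing the idle label. -/
structure LabelCtx (L : Type) where
  req : Set L
  off : Set L
  idle : L
  req_off_disj : ∀ a : L, ¬ (a ∈ req ∧ a ∈ off)
  idle_not_req : idle ∉ req
  idle_not_off : idle ∉ off
  bar : L → L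
  bar_req : ∀ a ∈ req, bar a ∈ off
  bar_off : ∀ a ∈ off, bar a ∈ req
  bar_bar : ∀ a ∈ req ∪ off, bar (bar a) = a
  bar_idle : bar idle = idle

variable {L Q : Type} {n : ℕ}

/-- A word consisting only of idle labels (□*). -/
def IdleWord (C : LabelCtx L) (w : List L) : Prop := ∀ x ∈ w, x = C.idle

/-- `w` is a request action on `b`: it has the form □* b □* with b ∈ 𝕣. -/
def IsRequestOn (C : LabelCtx L) (w : List L) (b : L) : Prop :=
  b ∈ C.req ∧ ∃ u v : List L, IdleWord C u ∧ IdleWord C v ∧ w = u ++ b :: v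

/-- `w` is an offer action on `b`: it has the form □* b □* with b ∈ 𝕠. -/
def IsOfferOn (C : LabelCtx L) (w : List L) (b : L) : Prop :=
  b ∈ C.off ∧ ∃ u v : List L, IdleWord C u ∧ IdleWord C v ∧ w = u ++ b :: v

/-- `w` is a match action on `b`: it has the form □* b □* b̄ □* with b ∈ 𝕣 ∪ 𝕠. -/
def IsMatchOn (C : LabelCtx L) (w : List L) (b : L) : Prop :=
  b ∈ C.req ∪ C.off ∧
    ∃ u v z : List L, IdleWord C u ∧ IdleWord C v ∧ IdleWord C z ∧
      w = u ++ b :: (v ++ C.bar b :: z)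

/-- An action is a request, offer, or match action (on some `b`). -/
def IsAction (C : LabelCtx L) (w : List L) : Prop :=
  ∃ b : L, IsRequestOn C w b ∨ IsOfferOn C w b ∨ IsMatchOn C w b

def IsMatch (C : LabelCtx L) (w : List L) : Prop := ∃ b : L, IsMatchOn C w b

/-- The relation ⋈̇ : both are actions of the same length, offers on `b` must face
requests on `b` and vice versa. -/
def BowtieDot (C : LabelCtx L) (u v : List L) : Prop :=
  IsAction C u ∧ IsAction C v ∧ u.length = v.length ∧
    (∀ b : L, IsOfferOn C u b → IsRequestOn C v b) ∧
    (∀ b : L, IsRequestOn C u b → IsOfferOn C v b)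

/-- ⋈ is the symmetric closure of ⋈̇. -/
def Bowtie (C : LabelCtx L) (u v : List L) : Prop :=
  BowtieDot C u v ∨ BowtieDot C v u

/-- A contract automaton of rank `n` (transition structure; the well-formedness
conditions are in `CAWF`). -/
structure CA (L Q : Type) (n : ℕ) where
  init : Fin n → Q
  trans : Set ((Fin n → Q) × (Fin n → L) × (Fin n → Q))
  acc : Set (Fin n → Q)

/-- Well-formedness of a contract automaton: every transition label is an action
(request, offer, or match), and components labelled □ stay idle. -/
def CAWF (C : LabelCtx L) (A : CA L Q n) : Prop :=
  ∀ t ∈ A.trans,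
    IsAction C (List.ofFn t.2.1) ∧
      ∀ i : Fin n, t.2.1 i = C.idle → t.1 i = t.2.2 i

/-- A run of a contract automaton from a state along a word ending in a state. -/
inductive CARun {L Q : Type} {n : ℕ} (A : CA L Q n) :
    (Fin n → Q) → List (Fin n → L) → (Fin n → Q) → Prop
  | nil (q : Fin n → Q) : CARun A q [] q
  | cons {q : Fin n → Q} {a : Fin n → L} {q' : Fin n → Q}
      {w : List (Fin n → L)} {q'' : Fin n → Q} :
      (q, a, q') ∈ A.trans → CARun A q' w q'' → CARun A q (a :: w) q''

/-- The language accepted by a contract automaton. -/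
def CALang (A : CA L Q n) : Set (List (Fin n → L)) :=
  { w | ∃ q, q ∈ A.acc ∧ CARun A A.init w q }

/-- A state is reachable from the initial state. -/
def CAReach (A : CA L Q n) (q : Fin n → Q) : Prop := ∃ w, CARun A A.init w q

def Deterministic (A : CA L Q n) : Prop :=
  ∀ q a q₁ q₂, (q, a, q₁) ∈ A.trans → (q, a, q₂) ∈ A.trans → q₁ = q₂

/-- A strong agreement: a finite non-empty word of match actions. -/
def StrongAgreement (C : LabelCtx L) (φ : List (Fin n → L)) : Prop :=
  φ ≠ [] ∧ ∀ a ∈ φ, IsMatch C (List.ofFn a)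

/-- A is strongly safe when its language consists of strong agreements only. -/
def StronglySafe (C : LabelCtx L) (A : CA L Q n) : Prop :=
  ∀ w ∈ CALang A, StrongAgreement C w

/-- K is a (strong) controller of A: a contract automaton with
L(K) ⊆ 𝔷 ∩ L(A). -/
def IsController (C : LabelCtx L) (A : CA L Q n) {Q' : Type} (K : CA L Q' n) : Prop :=
  CAWF C K ∧ ∀ w ∈ CALang K, StrongAgreement C w ∧ w ∈ CALang A

/-- K is a most permissive controller of A: a controller whose language contains
the language of every controller of A. -/
def IsMPC (C : LabelCtx L) (A : CA L Q n) {Q' : Type} (K : CA L Q' n) : Prop :=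
  IsController C A K ∧
    ∀ (Q'' : Type) (K' : CA L Q'' n), IsController C A K' → CALang K' ⊆ CALang K

/-- The sub-automaton 𝒦 of A consisting of the match transitions of A only. -/
def matchSub (C : LabelCtx L) (A : CA L Q n) : CA L Q n where
  init := A.init
  trans := { t | t ∈ A.trans ∧ IsMatch C (List.ofFn t.2.1) }
  acc := A.acc

/-- A state is redundant when no accepting state can be reached from it. -/
def Redundant (K : CA L Q n) (q : Fin n → Q) : Prop :=
  ¬ ∃ w qf, qf ∈ K.acc ∧ CARun K q w qf

/-- The concrete most permissive controller KS_A: the match transitions of A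
whose source and target are not redundant in 𝒦. -/
def mpc (C : LabelCtx L) (A : CA L Q n) : CA L Q n where
  init := A.init
  trans := { t | t ∈ (matchSub C A).trans ∧
      ¬ Redundant (matchSub C A) t.1 ∧ ¬ Redundant (matchSub C A) t.2.2 }
  acc := A.acc

/-! ### Communicating machines -/

/-- Actions of communicating machines: sends `(sr)!a` and receives `(sr)?a`;
`none` stands for the anonymous environment participant `−`. -/
inductive CAct (n : ℕ) (L : Type) : Type
  | send (s r : Option (Fin n)) (a : L) : CAct n L
  | recv (s r : Option (Fin n)) (a : L) : CAct n L

/-- `v` is a match action (as a rank-`n` tuple) on the request name `a`, with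
offer component `i` and request component `j`. -/
def MatchAt (C : LabelCtx L) (v : Fin n → L) (i j : Fin n) (a : L) : Prop :=
  i ≠ j ∧ a ∈ C.req ∧ v i = C.bar a ∧ v j = a ∧
    ∀ k : Fin n, k ≠ i → k ≠ j → v k = C.idle

/-- `v` is an offer action with offer component `i`, on the request name `a`. -/
def OfferAt (C : LabelCtx L) (v : Fin n → L) (i : Fin n) (a : L) : Prop :=
  a ∈ C.req ∧ v i = C.bar a ∧ ∀ k : Fin n, k ≠ i → v k = C.idle

/-- `v` is a request action with request component `j`, on the name `a`. -/
def RequestAt (C : LabelCtx L) (v : Fin n → L) (j : Fin n) (a : L) : Prop :=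
  a ∈ C.req ∧ v j = a ∧ ∀ k : Fin n, k ≠ j → v k = C.idle

/-- The CFSM transitions of participant `p` obtained by translating the contract
automaton `A` (Definition of the translation ⟦A⟧_p). -/
def cfsmTrans (C : LabelCtx L) (A : CA L Q n) (p : Fin n) :
    Set (Q × CAct n L × Q) :=
  { t | ∃ q v q', (q, v, q') ∈ A.trans ∧
      ((∃ i j a, MatchAt C v i j a ∧ p = i ∧
          t = (q i, CAct.send (some i) (some j) a, q' i)) ∨
       (∃ i j a, MatchAt C v i j a ∧ p = j ∧
          t = (q j, CAct.recv (some i) (some j) a, q' j)) ∨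
       (∃ i a, OfferAt C v i a ∧ p = i ∧
          t = (q i, CAct.send (some i) none a, q' i)) ∨
       (∃ j a, RequestAt C v j a ∧ p = j ∧
          t = (q j, CAct.recv none (some j) a, q' j))) }

/-- A configuration of a communicating system: local states and FIFO buffers. -/
structure Conf (n : ℕ) (Q L : Type) where
  st : Fin n → Q
  buf : Option (Fin n) × Option (Fin n) → List L

/-- The (unrestricted, unbounded-buffer) step relation of a communicating system
with transition relations `δ p` for each participant `p`. -/
inductive Step {L Q : Type} {n : ℕ} (δ : Fin n → Set (Q × CAct n L × Q)) :
    Conf n Q L → CAct n L → Conf n Q L → Prop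
  | send {c : Conf n Q L} {i : Fin n} {r : Option (Fin n)} {a : L} {q' : Q} :
      (c.st i, CAct.send (some i) r a, q') ∈ δ i →
      Step δ c (CAct.send (some i) r a)
        ⟨Function.update c.st i q',
          Function.update c.buf (some i, r) (c.buf (some i, r) ++ [a])⟩
  | recv {c : Conf n Q L} {s : Option (Fin n)} {j : Fin n} {a : L} {q' : Q}
      {rest : List L} :
      (c.st j, CAct.recv s (some j) a, q') ∈ δ j →
      c.buf (s, some j) = a :: rest →
      Step δ c (CAct.recv s (some j) a)
        ⟨Function.update c.st j q', Function.update c.buf (s, some j) rest⟩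

/-- Reachability in the unrestricted semantics. -/
def ReachU (δ : Fin n → Set (Q × CAct n L × Q)) : Conf n Q L → Conf n Q L → Prop :=
  Relation.ReflTransGen (fun c c' => ∃ ℓ, Step δ c ℓ c')

/-- All buffers are empty. -/
def Stable (c : Conf n Q L) : Prop := ∀ ch, c.buf ch = []

/-- The configuration is stable, or exactly one channel contains exactly one message. -/
def AtMostOne (c : Conf n Q L) : Prop :=
  Stable c ∨ ∃ ch a, c.buf ch = [a] ∧ ∀ ch', ch' ≠ ch → c.buf ch' = []

/-- Membership in RS≤1: reachable (from `c0`) and stable or with a single message. -/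
def RS1 (δ : Fin n → Set (Q × CAct n L × Q)) (c0 c : Conf n Q L) : Prop :=
  ReachU δ c0 c ∧ AtMostOne c

/-- The 1-buffer step relation ↠, relative to the initial configuration `c0`. -/
def Step1 (δ : Fin n → Set (Q × CAct n L × Q)) (c0 c : Conf n Q L)
    (ℓ : CAct n L) (c' : Conf n Q L) : Prop :=
  Step δ c ℓ c' ∧ RS1 δ c0 c ∧ RS1 δ c0 c'

/-- Firing a sequence of actions under the 1-buffer semantics. -/
inductive Steps1 {L Q : Type} {n : ℕ} (δ : Fin n → Set (Q × CAct n L × Q))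
    (c0 : Conf n Q L) : Conf n Q L → List (CAct n L) → Conf n Q L → Prop
  | nil (c : Conf n Q L) : Steps1 δ c0 c [] c
  | cons {c : Conf n Q L} {ℓ : CAct n L} {c' : Conf n Q L}
      {f : List (CAct n L)} {c'' : Conf n Q L} :
      Step1 δ c0 c ℓ c' → Steps1 δ c0 c' f c'' → Steps1 δ c0 c (ℓ :: f) c''

/-- Reachability under the 1-buffer semantics. -/
def Reach1 (δ : Fin n → Set (Q × CAct n L × Q)) (c0 c c' : Conf n Q L) : Prop :=
  ∃ f, Steps1 δ c0 c f c'

/-- The initial configuration of the communicating system obtained from `A`. -/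
def initConf (A : CA L Q n) : Conf n Q L := ⟨A.init, fun _ => []⟩

/-- Final configuration: stable with accepting (vector of) local states. -/
def FinalConf (Facc : Set (Fin n → Q)) (c : Conf n Q L) : Prop :=
  Stable c ∧ c.st ∈ Facc

/-- Deadlock under the 1-buffer semantics: not final and no outgoing ↠ step. -/
def Deadlock1 (δ : Fin n → Set (Q × CAct n L × Q)) (c0 : Conf n Q L)
    (Facc : Set (Fin n → Q)) (c : Conf n Q L) : Prop :=
  ¬ FinalConf Facc c ∧ ¬ ∃ ℓ c', Step1 δ c0 c ℓ c'

/-- Convergence under the 1-buffer semantics: from every reachable configuration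
a final configuration is reachable. -/
def Convergent1 (δ : Fin n → Set (Q × CAct n L × Q)) (c0 : Conf n Q L)
    (Facc : Set (Fin n → Q)) : Prop :=
  ∀ c, Reach1 δ c0 c0 c → ∃ c', Reach1 δ c0 c c' ∧ FinalConf Facc c'

/-- Convergence under the unrestricted (unbounded-buffer) semantics. -/
def ConvergentU (δ : Fin n → Set (Q × CAct n L × Q)) (c0 : Conf n Q L)
    (Facc : Set (Fin n → Q)) : Prop :=
  ∀ c, ReachU δ c0 c → ∃ c', ReachU δ c c' ∧ FinalConf Facc c'

/-- The translation ⟦φ⟧ of a word of contract-automaton actions into a trace of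
communicating-machine actions (a relation, since ⟦·⟧ is partial). -/
inductive SemWord {L : Type} {n : ℕ} (C : LabelCtx L) :
    List (Fin n → L) → List (CAct n L) → Prop
  | nil : SemWord C [] []
  | matchw {v : Fin n → L} {i j : Fin n} {a : L} {φ : List (Fin n → L)}
      {f : List (CAct n L)} :
      MatchAt C v i j a → SemWord C φ f →
      SemWord C (v :: φ)
        (CAct.send (some i) (some j) a :: CAct.recv (some i) (some j) a :: f)
  | offerw {v : Fin n → L} {i : Fin n} {a : L} {φ : List (Fin n → L)}
      {f : List (CAct n L)} :
      OfferAt C v i a → SemWord C φ f →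
      SemWord C (v :: φ) (CAct.send (some i) none a :: f)
  | requestw {v : Fin n → L} {j : Fin n} {a : L} {φ : List (Fin n → L)}
      {f : List (CAct n L)} :
      RequestAt C v j a → SemWord C φ f →
      SemWord C (v :: φ) (CAct.recv none (some j) a :: f)

/-- A liable transition of the controlled system KS_A/A: a transition of A, not
in the controller, whose source is reachable in the controller. -/
def Liable (C : LabelCtx L) (A : CA L Q n)
    (t : (Fin n → Q) × (Fin n → L) × (Fin n → Q)) : Prop :=
  t ∈ A.trans ∧ t ∉ (mpc C A).trans ∧ CAReach (mpc C A) t.1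

/-- The run of A from its initial state labelled φ traverses a liable transition. -/
def TraversesLiable (C : LabelCtx L) (A : CA L Q n) (φ : List (Fin n → L)) : Prop :=
  ∃ φ₁ v φ₂ q q', φ = φ₁ ++ v :: φ₂ ∧ CARun A A.init φ₁ q ∧
    Liable C A (q, v, q')

/-- The branching condition. -/
def Branching (C : LabelCtx L) (B : CA L Q n) : Prop :=
  ∀ q₁ q₂, CAReach B q₁ → CAReach B q₂ →
    ∀ (v : Fin n → L) (i j : Fin n) (a : L), MatchAt C v i j a →
      (∃ q', (q₁, v, q') ∈ B.trans) → q₁ i = q₂ i →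
      ∃ q'', (q₂, v, q'') ∈ B.trans

/-- A mixed-choice state: some participant has both an outgoing offer (p-th label
component in 𝕠) and an outgoing request (p-th label component in 𝕣). -/
def MixedChoiceState (C : LabelCtx L) (A : CA L Q n) (q : Fin n → Q) : Prop :=
  ∃ (p : Fin n) (v₁ : Fin n → L) (q₁ : Fin n → Q) (v₂ : Fin n → L) (q₂ : Fin n → Q),
    (q, v₁, q₁) ∈ A.trans ∧ (q, v₂, q₂) ∈ A.trans ∧ v₁ p ∈ C.off ∧ v₂ p ∈ C.req

/-- A principal: a rank-1 contract automaton no two of whose transitions have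
complementary (⋈) labels. -/
def IsPrincipal (C : LabelCtx L) (P : CA L Q 1) : Prop :=
  CAWF C P ∧ ∀ t₁ ∈ P.trans, ∀ t₂ ∈ P.trans,
    ¬ Bowtie C (List.ofFn t₁.2.1) (List.ofFn t₂.2.1)

/-- The idle tuple □ⁿ. -/
def idleVec (C : LabelCtx L) (m : ℕ) : Fin m → L := fun _ => C.idle

/-- The (binary) product of contract automata: synchronisation of ⋈-related
transitions; single components may move alone only when no synchronisation with
the other component is possible from the current state. -/
def prodCA (C : LabelCtx L) {m k : ℕ} (A : CA L Q m) (B : CA L Q k) :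
    CA L Q (m + k) where
  init := Fin.append A.init B.init
  acc := { q | ∃ qa qb, qa ∈ A.acc ∧ qb ∈ B.acc ∧ q = Fin.append qa qb }
  trans := { t |
    (∃ qa a qa' qb b qb', (qa, a, qa') ∈ A.trans ∧ (qb, b, qb') ∈ B.trans ∧
        Bowtie C (List.ofFn a) (List.ofFn b) ∧
        t = (Fin.append qa qb, Fin.append a b, Fin.append qa' qb')) ∨
    (∃ qa a qa' qb, (qa, a, qa') ∈ A.trans ∧
        (∀ b qb', (qb, b, qb') ∈ B.trans → ¬ Bowtie C (List.ofFn a) (List.ofFn b)) ∧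
        t = (Fin.append qa qb, Fin.append a (idleVec C k), Fin.append qa' qb)) ∨
    (∃ qb b qb' qa, (qb, b, qb') ∈ B.trans ∧
        (∀ a qa', (qa, a, qa') ∈ A.trans → ¬ Bowtie C (List.ofFn b) (List.ofFn a)) ∧
        t = (Fin.append qa qb, Fin.append (idleVec C m) b, Fin.append qa qb')) }

/-- Final configuration with per-participant accepting sets. -/
def FinalP {L Q : Type} {n : ℕ} (Facc : Fin n → Set Q) (c : Conf n Q L) : Prop :=
  Stable c ∧ ∀ p : Fin n, c.st p ∈ Facc p

/-- A match vector has (at least) two distinct non-idle components. -/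
lemma match_two_nonidle {L : Type} {n : ℕ} {C : LabelCtx L} {v : Fin n → L}
    (h : IsMatch C (List.ofFn v)) :
    ∃ k₁ k₂ : Fin n, k₁ ≠ k₂ ∧ v k₁ ≠ C.idle ∧ v k₂ ≠ C.idle := by
  obtain ⟨b, hb, u, w, z, _, _, _, heq⟩ := h
  have hb1 : b ≠ C.idle := by
    rintro rfl
    rcases hb with hb | hb
    · exact C.idle_not_req hb
    · exact C.idle_not_off hb
  have hb2 : C.bar b ≠ C.idle := by
    intro hbar
    rcases hb with hb | hb
    · exact C.idle_not_off (hbar ▸ C.bar_req b hb)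
    · exact C.idle_not_req (hbar ▸ C.bar_off b hb)
  have hlen : n = u.length + (1 + (w.length + (1 + z.length))) := by
    have := congrArg List.length heq
    simp [List.length_append] at this
    omega
  have h₁ : u.length < n := by omega
  have h₂ : u.length + (w.length + 1) < n := by omega
  refine ⟨⟨u.length, h₁⟩, ⟨u.length + (w.length + 1), h₂⟩, ?_, ?_, ?_⟩
  · intro hc
    have := congrArg Fin.val hc
    simp at this
  · have e0 : v ⟨u.length, h₁⟩ = (List.ofFn v)[u.length]'(by simpa using h₁) := by
      simp
    have e1 : (List.ofFn v)[u.length]'(by simpa using h₁)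
        = (u ++ b :: (w ++ C.bar b :: z))[u.length]'(by
            rw [← heq]; simpa using h₁) := List.getElem_of_eq heq _
    rw [e0, e1, List.getElem_append_right (le_refl u.length)]
    simpa using hb1
  · have e0 : v ⟨u.length + (w.length + 1), h₂⟩
        = (List.ofFn v)[u.length + (w.length + 1)]'(by simpa using h₂) := by
      simp
    have e1 : (List.ofFn v)[u.length + (w.length + 1)]'(by simpa using h₂)
        = (u ++ b :: (w ++ C.bar b :: z))[u.length + (w.length + 1)]'(by
            rw [← heq]; simpa using h₂) := List.getElem_of_eq heq _
    rw [e0, e1,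
      List.getElem_append_right (by omega : u.length ≤ u.length + (w.length + 1))]
    have e2 : u.length + (w.length + 1) - u.length = w.length + 1 := by omega
    simp only [e2, List.getElem_cons_succ]
    rw [List.getElem_append_right (le_refl w.length)]
    simpa using hb2

lemma not_offer_of_match {L : Type} {n : ℕ} {C : LabelCtx L} {v : Fin n → L}
    {i : Fin n} {a : L} (h : IsMatch C (List.ofFn v)) (ho : OfferAt C v i a) :
    False := by
  obtain ⟨k₁, k₂, hne, h₁, h₂⟩ := match_two_nonidle h
  by_cases hk : k₁ = i
  · exact h₂ (ho.2.2 k₂ (fun hc => hne (hk.trans hc.symm)))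
  · exact h₁ (ho.2.2 k₁ hk)

lemma not_request_of_match {L : Type} {n : ℕ} {C : LabelCtx L} {v : Fin n → L}
    {j : Fin n} {a : L} (h : IsMatch C (List.ofFn v)) (ho : RequestAt C v j a) :
    False := by
  obtain ⟨k₁, k₂, hne, h₁, h₂⟩ := match_two_nonidle h
  by_cases hk : k₁ = j
  · exact h₂ (ho.2.2 k₂ (fun hc => hne (hk.trans hc.symm)))
  · exact h₁ (ho.2.2 k₁ hk)

lemma lift_key {L Q : Type} {n : ℕ}
    (C : LabelCtx L) (A : CA L Q n) (hA : CAWF C A) :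
    ∀ {φ : List (Fin n → L)} {f : List (CAct n L)}, SemWord C φ f →
      ∀ {q q' : Fin n → Q}, CARun (mpc C A) q φ q' →
      ReachU (cfsmTrans C (mpc C A)) (initConf (mpc C A)) ⟨q, fun _ => []⟩ →
      Steps1 (cfsmTrans C (mpc C A)) (initConf (mpc C A))
        ⟨q, fun _ => []⟩ f ⟨q', fun _ => []⟩ := by
  intro φ f hsem
  induction hsem with
  | nil =>
    intro q q' hrun _
    cases hrun
    exact Steps1.nil _
  | @matchw v i j a φ f hm hsem ih =>
    intro q q' hrun hre
    cases hrun with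
    | @cons _ _ q₀ _ _ ht hrun' =>
      obtain ⟨hij, ha, hvi, hvj, hother⟩ := hm
      have htA : (q, v, q₀) ∈ A.trans := ht.1.1
      have hidle : ∀ k, v k = C.idle → q k = q₀ k := (hA _ htA).2
      set δ := cfsmTrans C (mpc C A)
      set c0 := initConf (mpc C A)
      have htsend : (q i, CAct.send (some i) (some j) a, q₀ i) ∈ δ i :=
        ⟨q, v, q₀, ht, Or.inl ⟨i, j, a, ⟨hij, ha, hvi, hvj, hother⟩, rfl, rfl⟩⟩
      have htrecv : (q j, CAct.recv (some i) (some j) a, q₀ j) ∈ δ j :=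
        ⟨q, v, q₀, ht, Or.inr (Or.inl ⟨i, j, a, ⟨hij, ha, hvi, hvj, hother⟩, rfl, rfl⟩)⟩
      set c : Conf n Q L := ⟨q, fun _ => []⟩ with hc
      set c₁ : Conf n Q L :=
        ⟨Function.update c.st i (q₀ i),
          Function.update c.buf (some i, some j) (c.buf (some i, some j) ++ [a])⟩
        with hc₁
      have step1 : Step δ c (CAct.send (some i) (some j) a) c₁ := Step.send htsend
      have hc₁st : c₁.st j = q j := by
        simp only [hc₁, hc]
        exact Function.update_of_ne (Ne.symm hij) _ _
      have hc₁buf : c₁.buf (some i, some j) = a :: [] := by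
        simp [hc₁, hc]
      set c₂ : Conf n Q L :=
        ⟨Function.update c₁.st j (q₀ j), Function.update c₁.buf (some i, some j) []⟩
        with hc₂
      have step2 : Step δ c₁ (CAct.recv (some i) (some j) a) c₂ := by
        refine Step.recv (rest := []) ?_ hc₁buf
        rw [hc₁st]; exact htrecv
      have hc₂eq : c₂ = ⟨q₀, fun _ => []⟩ := by
        simp only [hc₂, hc₁, hc]
        congr 1
        · funext k
          by_cases hkj : k = j
          · subst hkj; simp
          · by_cases hki : k = i
            · subst hki
              rw [Function.update_of_ne hkj, Function.update_self]
            · rw [Function.update_of_ne hkj, Function.update_of_ne hki]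
              exact hidle k (hother k hki hkj)
        · funext ch
          by_cases hch : ch = (some i, some j)
          · subst hch; simp
          · rw [Function.update_of_ne hch, Function.update_of_ne hch]
      have hre₁ : ReachU δ c0 c₁ := hre.tail ⟨_, step1⟩
      have hre₂ : ReachU δ c0 c₂ := hre₁.tail ⟨_, step2⟩
      have hamo : AtMostOne c := Or.inl (fun ch => rfl)
      have hamo₁ : AtMostOne c₁ := by
        refine Or.inr ⟨(some i, some j), a, ?_, ?_⟩
        · simp [hc₁, hc]
        · intro ch' hch'
          simp only [hc₁, hc]
          rw [Function.update_of_ne hch']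
      have hamo₂ : AtMostOne c₂ := by
        rw [hc₂eq]; exact Or.inl (fun ch => rfl)
      refine Steps1.cons ⟨step1, ⟨hre, hamo⟩, ⟨hre₁, hamo₁⟩⟩
        (Steps1.cons ⟨step2, ⟨hre₁, hamo₁⟩, ⟨hre₂, hamo₂⟩⟩ ?_)
      rw [hc₂eq]
      exact ih hrun' (hc₂eq ▸ hre₂)
  | @offerw v i a φ f hm hsem ih =>
    intro q q' hrun _
    cases hrun with
    | cons ht _ =>
      exact absurd hm (fun ho => not_offer_of_match ht.1.2 ho)
  | @requestw v j a φ f hm hsem ih =>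
    intro q q' hrun _
    cases hrun with
    | cons ht _ =>
      exact absurd hm (fun ho => not_request_of_match ht.1.2 ho)

/-- Theorem 1.1: if the controller KS_A can perform φ, then the
communicating system S(KS_A) can perform ⟦φ⟧ under the 1-buffer semantics. -/
theorem controller_moves_lift_to_system {L Q : Type} {n : ℕ}
    (C : LabelCtx L) (A : CA L Q n) (hA : CAWF C A) (hdet : Deterministic A) :
    ∀ (φ : List (Fin n → L)) (q' : Fin n → Q),
      CARun (mpc C A) (mpc C A).init φ q' →
      ∀ f : List (CAct n L), SemWord C φ f →
        ∃ c', Steps1 (cfsmTrans C (mpc C A)) (initConf (mpc C A))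
                (initConf (mpc C A)) f c' := by
  intro φ q' hrun f hsem
  refine ⟨⟨q', fun _ => []⟩, ?_⟩
  have h := lift_key C A hA hsem hrun Relation.ReflTransGen.refl
  exact h

end CAut
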